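/- arXiv:2501.16478 — 4 statements merged into one kernel-verified Lean document; each statement's English description precedes it below -/
import Mathlib

section
/- For all s ≥ 0, t_{2s+1}(x) + 2 = (x + 2)·(c_s(x) - c_{s-1}(x))², as polynomials over ℤ. -/
open Polynomial

/-- `c n` is the paper's `c_{n-1}`, so `c 0 = c_{-1} = 0`. -/
noncomputable def c : ℕ → Polynomial ℤ
  | 0 => 0
  | 1 => 1
  | (n + 2) => X * c (n + 1) - c n

noncomputable def t : ℕ → Polynomial ℤ
  | 0 => 2
  | 1 => X
  | (n + 2) => X * t (n + 1) - t n

lemma t_add4 (n : ℕ) : t (n + 4) = (X ^ 2 - 2) * t (n + 2) - t n := by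
  have h1 : t (n + 2) = X * t (n + 1) - t n := rfl
  have h3 : t (n + 3) = X * t (n + 2) - t (n + 1) := rfl
  have h4 : t (n + 4) = X * t (n + 3) - t (n + 2) := rfl
  linear_combination h4 + X * h3 + h1

lemma inv (s : ℕ) :
    (c (s + 2) - c (s + 1)) ^ 2 + (c (s + 1) - c s) ^ 2
      - X * ((c (s + 2) - c (s + 1)) * (c (s + 1) - c s)) = 2 - X := by
  induction s with
  | zero =>
    simp only [c]
    ring
  | succ n ih =>
    show (c (n + 3) - c (n + 2)) ^ 2 + (c (n + 2) - c (n + 1)) ^ 2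
      - X * ((c (n + 3) - c (n + 2)) * (c (n + 2) - c (n + 1))) = 2 - X
    have h : c (n + 3) = X * c (n + 2) - c (n + 1) := rfl
    have h2 : c (n + 2) = X * c (n + 1) - c n := rfl
    linear_combination ih + (c (n + 3) - 2 * c (n + 2) + (X - 1) * c (n + 1)) * h
      - ((X - 1) * c (n + 2) - 2 * c (n + 1) + c n) * h2

theorem stmt_2 (s : ℕ) :
    t (2 * s + 1) + 2 = (X + 2) * (c (s + 1) - c s) ^ 2 := by
  induction s using Nat.twoStepInduction with
  | zero =>
    simp only [c, t]; ring
  | one =>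
    show t 3 + 2 = _
    simp only [c, t]; ring
  | more n ih1 ih2 =>
    have ih2' : t (2 * n + 3) + 2 = (X + 2) * (c (n + 2) - c (n + 1)) ^ 2 := ih2
    have hidx : 2 * (n + 2) + 1 = (2 * n + 1) + 4 := by ring
    rw [hidx, t_add4]
    show (X ^ 2 - 2) * t (2 * n + 1 + 2) - t (2 * n + 1) + 2
      = (X + 2) * (c (n + 3) - c (n + 2)) ^ 2
    have ht : t (2 * n + 1 + 2) = t (2 * n + 3) := rfl
    have hc : c (n + 3) = X * c (n + 2) - c (n + 1) := rfl
    have h2 : c (n + 2) = X * c (n + 1) - c n := rfl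
    rw [ht, hc]
    linear_combination (X ^ 2 - 2 : ℤ[X]) * ih2' - ih1 - 2 * (X + 2) * inv n
      + (X + 2) * ((2 * X - 1) * c (n + 2) + (X - 2) * c (n + 1) + c n) * h2
      - 2 * X * (X + 2) * c (n + 1) * h2
end

section
/- For all s ≥ 0, t_{2s+1}(x) - 2 = (x - 2)·(c_s(x) + c_{s-1}(x))², as polynomials over ℤ. -/
open Polynomial

lemma c_key (s : ℕ) : c (s + 1) ^ 2 + c s ^ 2 - X * c (s + 1) * c s = 1 := by
  induction s with
  | zero => simp [c]
  | succ n ih =>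
    have hc : c (n + 2) = X * c (n + 1) - c n := rfl
    show c (n + 2) ^ 2 + c (n + 1) ^ 2 - X * c (n + 2) * c (n + 1) = 1
    rw [hc]
    linear_combination ih

lemma both (s : ℕ) :
    t (2 * s + 1) - 2 = (X - 2) * (c (s + 1) + c s) ^ 2 ∧
    t (2 * s + 2) - 2 = (X - 2) * (X + 2) * c (s + 1) ^ 2 := by
  induction s with
  | zero =>
    constructor
    · show (X : Polynomial ℤ) - 2 = (X - 2) * (1 + 0) ^ 2
      ring
    · show (X : Polynomial ℤ) * X - 2 - 2 = (X - 2) * (X + 2) * 1 ^ 2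
      ring
  | succ n ih =>
    obtain ⟨h1, h2⟩ := ih
    have hc : c (n + 2) = X * c (n + 1) - c n := rfl
    have ht3 : t (2 * n + 3) = X * t (2 * n + 2) - t (2 * n + 1) := rfl
    have ht4 : t (2 * n + 4) = X * t (2 * n + 3) - t (2 * n + 2) := rfl
    have k := c_key n
    have k1 := c_key (n + 1)
    rw [show n + 1 + 1 = n + 2 from rfl, hc] at k1
    have e3 : t (2 * n + 3) - 2 = (X - 2) * (X * c (n + 1) - c n + c (n + 1)) ^ 2 := by
      linear_combination ht3 + X * h2 - h1 - 2 * (X - 2) * k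
    have e4 : t (2 * n + 4) - 2 = (X - 2) * (X + 2) * (X * c (n + 1) - c n) ^ 2 := by
      linear_combination ht4 + X * e3 - h2 - 2 * (X - 2) * k1
    constructor
    · show t (2 * n + 3) - 2 = (X - 2) * (c (n + 2) + c (n + 1)) ^ 2
      rw [hc]; exact e3
    · show t (2 * n + 4) - 2 = (X - 2) * (X + 2) * c (n + 2) ^ 2
      rw [hc]; exact e4

theorem stmt_3 (s : ℕ) :
    t (2 * s + 1) - 2 = (X - 2) * (c (s + 1) + c s) ^ 2 := by
  exact (both s).1
end

section
/- For s, s' ≥ 1, the polynomial p⁻_s divides p⁻_{s'} (over ℤ) if and only if 2s+1 divides 2s'+1, where p⁻_n = c_n - c_{n-1}. -/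
open Polynomial

noncomputable def p (n : ℕ) : Polynomial ℤ := c (n + 1) - c n

noncomputable def D : ℕ → Polynomial ℤ
  | 0 => 2
  | 1 => X
  | (n + 2) => X * D (n + 1) - D n

lemma c_rec (n : ℕ) : c (n + 2) = X * c (n + 1) - c n := rfl

lemma p_zero : p 0 = 1 := by simp [p, c]

lemma p_one : p 1 = X - 1 := by
  have h2 : c 2 = X := by rw [c_rec]; simp [c]
  simp [p, h2, c]

lemma p_rec (n : ℕ) : p (n + 2) = X * p (n + 1) - p n := by
  show c (n+3) - c (n+2) = X * (c (n+2) - c (n+1)) - (c (n+1) - c n)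
  rw [show n + 3 = (n+1) + 2 from rfl, c_rec, c_rec]
  ring

noncomputable def rho (m j : ℕ) : Polynomial ℤ :=
  if j ≤ m then p (m - j) else p (j - m - 1)

lemma rho_of_le {m j : ℕ} (h : j ≤ m) : rho m j = p (m - j) := if_pos h

lemma rho_of_gt {m j : ℕ} (h : m < j) : rho m j = p (j - m - 1) := if_neg (by omega)

lemma rho_rec (m j : ℕ) : rho m (j + 2) = X * rho m (j + 1) - rho m j := by
  rcases lt_trichotomy m j with h | h | h
  · obtain ⟨t, rfl⟩ : ∃ t, j = m + 1 + t := ⟨j - m - 1, by omega⟩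
    rw [rho_of_gt (by omega), rho_of_gt (by omega), rho_of_gt (by omega)]
    rw [show m + 1 + t + 2 - m - 1 = t + 2 by omega,
        show m + 1 + t + 1 - m - 1 = t + 1 by omega,
        show m + 1 + t - m - 1 = t by omega]
    exact p_rec t
  · subst h
    rw [rho_of_gt (by omega), rho_of_gt (by omega), rho_of_le (le_refl m)]
    rw [show m + 2 - m - 1 = 1 by omega, show m + 1 - m - 1 = 0 by omega,
        Nat.sub_self, p_zero, p_one]
    ring
  · rcases Nat.lt_or_ge j (m - 1) with h2 | h2
    · obtain ⟨t, rfl⟩ : ∃ t, m = j + 2 + t := ⟨m - j - 2, by omega⟩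
      rw [rho_of_le (by omega), rho_of_le (by omega), rho_of_le (by omega)]
      rw [show j + 2 + t - (j + 2) = t by omega,
          show j + 2 + t - (j + 1) = t + 1 by omega,
          show j + 2 + t - j = t + 2 by omega]
      rw [p_rec t]; ring
    · have hm : m = j + 1 := by omega
      subst hm
      rw [rho_of_gt (by omega), rho_of_le (le_refl _), rho_of_le (by omega)]
      rw [show j + 2 - (j + 1) - 1 = 0 by omega, Nat.sub_self,
          show j + 1 - j = 1 by omega, p_zero, p_one]
      ring

lemma gen (j m : ℕ) : D j * p m = p (m + j) + rho m j := by
  induction j using Nat.twoStepInduction with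
  | zero =>
    rw [show D 0 = 2 from rfl, rho_of_le (Nat.zero_le m), Nat.sub_zero, Nat.add_zero]
    ring
  | one =>
    rw [show D 1 = X from rfl]
    cases m with
    | zero =>
      rw [rho_of_gt (by omega), p_zero, p_one]
      ring
    | succ k =>
      rw [rho_of_le (by omega), show k + 1 - 1 = k by omega, p_rec k]
      ring
  | more j ih0 ih1 =>
    rw [show D (j + 2) = X * D (j + 1) - D j from rfl, rho_rec]
    have : p (m + (j + 2)) = X * p (m + (j + 1)) - p (m + j) := by
      rw [show m + (j + 2) = (m + j) + 2 from by ring, p_rec,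
          show m + j + 1 = m + (j + 1) from by ring]
    rw [this]
    rw [sub_mul, mul_assoc, ih0, ih1]
    ring

lemma p_monic (n : ℕ) : (p n).Monic ∧ (p n).natDegree = n := by
  have key : ∀ n, (c (n + 1)).Monic ∧ (c (n + 1)).natDegree = n := by
    intro n
    induction n using Nat.twoStepInduction with
    | zero => constructor <;> simp [c, monic_one]
    | one =>
      have h2 : c 2 = X := by rw [c_rec]; simp [c]
      rw [h2]; exact ⟨monic_X, natDegree_X⟩
    | more n ih0 ih1 =>
      rw [show n + 2 + 1 = (n + 1) + 2 from rfl, c_rec]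
      have hm : (X * c (n + 1 + 1)).Monic := monic_X.mul ih1.1
      have hd : (X * c (n + 1 + 1)).natDegree = n + 2 := by
        rw [natDegree_mul (X_ne_zero) ih1.1.ne_zero, natDegree_X, ih1.2]; omega
      have hlt : (c (n + 1)).degree < (X * c (n + 1 + 1)).degree := by
        apply lt_of_le_of_lt (degree_le_natDegree)
        rw [degree_eq_natDegree hm.ne_zero, hd, ih0.2]
        exact_mod_cast by omega
      constructor
      · rw [sub_eq_add_neg]
        exact hm.add_of_left (by rwa [degree_neg])
      · rw [sub_eq_add_neg, natDegree_add_eq_left_of_degree_lt (by rwa [degree_neg]), hd]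
  cases n with
  | zero => rw [p_zero]; exact ⟨monic_one, natDegree_one⟩
  | succ k =>
    have h1 := key (k + 1)
    have h0 := key k
    have hlt : (c (k + 1)).degree < (c (k + 2)).degree := by
      apply lt_of_le_of_lt (degree_le_natDegree)
      rw [degree_eq_natDegree h1.1.ne_zero, h1.2, h0.2]
      exact_mod_cast by omega
    constructor
    · rw [p, sub_eq_add_neg]
      exact h1.1.add_of_left (by rwa [degree_neg])
    · rw [p, sub_eq_add_neg, natDegree_add_eq_left_of_degree_lt (by rwa [degree_neg]), h1.2]

lemma p_ne_zero (n : ℕ) : p n ≠ 0 := (p_monic n).1.ne_zero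

lemma dvd_add_per (s n : ℕ) : p s ∣ p (n + (2 * s + 1)) + p n := by
  have h := gen (n + s + 1) s
  rw [rho_of_gt (by omega), show n + s + 1 - s - 1 = n by omega,
      show s + (n + s + 1) = n + (2 * s + 1) by ring] at h
  exact ⟨D (n + s + 1), by linear_combination -h⟩

lemma dvd_iff_step (s n : ℕ) : p s ∣ p (n + (2 * s + 1)) ↔ p s ∣ p n := by
  constructor
  · intro h
    have := dvd_sub (dvd_add_per s n) h
    simpa using this
  · intro h
    have := dvd_sub (dvd_add_per s n) h
    simpa using this

lemma dvd_iff_mul (s n k : ℕ) : p s ∣ p (n + k * (2 * s + 1)) ↔ p s ∣ p n := by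
  induction k with
  | zero => simp
  | succ m ih =>
    rw [show n + (m + 1) * (2 * s + 1) = (n + m * (2 * s + 1)) + (2 * s + 1) by ring,
        dvd_iff_step, ih]

theorem stmt_15 (s s' : ℕ) (hs : 1 ≤ s) (hs' : 1 ≤ s') :
    (c (s + 1) - c s) ∣ (c (s' + 1) - c s') ↔ (2 * s + 1) ∣ (2 * s' + 1) := by
  show p s ∣ p s' ↔ _
  constructor
  · intro h
    set r := s' % (2 * s + 1) with hr
    set k := s' / (2 * s + 1) with hk
    have hrlt : r < 2 * s + 1 := Nat.mod_lt _ (by omega)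
    have hdm : (2 * s + 1) * k + r = s' := Nat.div_add_mod s' (2 * s + 1)
    rw [mul_comm] at hdm
    have hseq : s' = r + k * (2 * s + 1) := by omega
    rw [hseq, dvd_iff_mul] at h
    have hrs : r = s := by
      by_contra hne
      rcases lt_or_gt_of_ne hne with hlt | hgt
      · have := Polynomial.natDegree_le_of_dvd h (p_ne_zero r)
        rw [(p_monic s).2, (p_monic r).2] at this
        omega
      · -- s < r ≤ 2s : reflect
        have hg := gen (r - s) s
        rw [rho_of_le (by omega), show s + (r - s) = r by omega] at hg
        have h2 : p s ∣ p (s - (r - s)) := by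
          have : p s ∣ p r + p (s - (r - s)) := ⟨D (r - s), by linear_combination -hg⟩
          have := dvd_sub this h
          simpa using this
        have := Polynomial.natDegree_le_of_dvd h2 (p_ne_zero _)
        rw [(p_monic s).2, (p_monic _).2] at this
        omega
    refine ⟨2 * k + 1, ?_⟩
    rw [hseq, hrs]; ring
  · intro h
    obtain ⟨q, hq⟩ := h
    rcases Nat.even_or_odd q with ⟨t, ht⟩ | ⟨k, hk⟩
    · exfalso
      have h2 : 2 * s' + 1 = 2 * ((2 * s + 1) * t) := by rw [hq, ht]; ring
      omega
    · have h2 : 2 * s' + 1 = 2 * (s + k * (2 * s + 1)) + 1 := by rw [hq, hk]; ring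
      have hs'eq : s' = s + k * (2 * s + 1) := by omega
      rw [hs'eq, dvd_iff_mul]
end

section
/- The Chebyshev polynomial T_n of the first kind is irreducible over ℚ if and only if n is a power of 2. -/
open Polynomial

namespace Stmt17Aux

open Polynomial.Chebyshev

/-- Degree and leading coefficient of Chebyshev T over ℚ. -/
lemma T_deg_lead : ∀ n : ℕ, (Chebyshev.T ℚ (n : ℤ)).natDegree = n ∧
    (Chebyshev.T ℚ (n : ℤ)).leadingCoeff = 2 ^ (n - 1) := by
  intro n
  induction n using Nat.strong_induction_on with
  | _ n ih =>
    match n with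
    | 0 => simp [Chebyshev.T_zero]
    | 1 => simp [Chebyshev.T_one]
    | (m+2) =>
      have h1 := ih (m+1) (by omega)
      have h0 := ih m (by omega)
      have key : Chebyshev.T ℚ ((m+2 : ℕ) : ℤ) =
          2 * X * Chebyshev.T ℚ ((m+1 : ℕ) : ℤ) - Chebyshev.T ℚ ((m : ℕ) : ℤ) := by
        push_cast
        exact Chebyshev.T_add_two ℚ (m : ℤ)
      have hT1ne : Chebyshev.T ℚ ((m+1 : ℕ) : ℤ) ≠ 0 := by
        intro hc
        have := h1.2
        rw [hc] at this
        simp at this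
        exact absurd this.symm (by positivity)
      have h2X : (2 * X : ℚ[X]) ≠ 0 := by
        intro hc
        have := congrArg (fun p => Polynomial.coeff p 1) hc
        simp at this
      have hPdeg : (2 * X * Chebyshev.T ℚ ((m+1 : ℕ) : ℤ)).natDegree = m + 2 := by
        rw [natDegree_mul h2X hT1ne, h1.1]
        simp [natDegree_mul (two_ne_zero (α := ℚ[X])) (X_ne_zero)]
        omega
      have hPlead : (2 * X * Chebyshev.T ℚ ((m+1 : ℕ) : ℤ)).leadingCoeff = 2 ^ (m + 1) := by
        have hl2 : (2 : ℚ[X]).leadingCoeff = 2 := by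
          rw [← map_ofNat (C : ℚ →+* ℚ[X]) 2, leadingCoeff_C]
        rw [leadingCoeff_mul, h1.2, leadingCoeff_mul, hl2, leadingCoeff_X,
          Nat.add_sub_cancel]
        ring
      have hlt : (Chebyshev.T ℚ ((m : ℕ) : ℤ)).degree <
          (2 * X * Chebyshev.T ℚ ((m+1 : ℕ) : ℤ)).degree := by
        have hd1 : (Chebyshev.T ℚ ((m : ℕ) : ℤ)).natDegree = m := h0.1
        have hne : (2 * X * Chebyshev.T ℚ ((m+1 : ℕ) : ℤ)) ≠ 0 := mul_ne_zero h2X hT1ne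
        calc (Chebyshev.T ℚ ((m : ℕ) : ℤ)).degree ≤ m := by
              exact_mod_cast degree_le_natDegree.trans (by exact_mod_cast le_of_eq (by rw [hd1]))
          _ < (m + 2 : ℕ) := by exact_mod_cast by omega
          _ = _ := by rw [← hPdeg, degree_eq_natDegree hne]
      constructor
      · rw [key]
        exact (natDegree_eq_of_degree_eq (degree_sub_eq_left_of_degree_lt hlt)).trans hPdeg
      · rw [key, leadingCoeff_sub_of_degree_lt hlt, hPlead]
        norm_num

lemma T_ne_zero (n : ℕ) : Chebyshev.T ℚ (n : ℤ) ≠ 0 := by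
  intro hc
  have := (T_deg_lead n).2
  rw [hc] at this
  simp at this
  exact absurd this.symm (by positivity)

lemma T_odd_eval : ∀ j : ℕ, (Chebyshev.T ℚ (2 * (j : ℤ) + 1)).eval 0 = 0 := by
  intro j
  induction j with
  | zero => simp [Chebyshev.T_one]
  | succ j ih =>
    have key := Chebyshev.T_add_two ℚ (2 * (j : ℤ) + 1)
    have : (2 * ((j : ℤ) + 1) + 1) = 2 * (j : ℤ) + 1 + 2 := by ring
    rw [Nat.cast_add, Nat.cast_one, this, key]
    simp [ih]

lemma T_two_mul' (s : ℤ) : Chebyshev.T ℚ (2 * s) = 2 * (Chebyshev.T ℚ s) ^ 2 - 1 := by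
  rw [Chebyshev.T_mul, Chebyshev.T_two]
  simp [sub_comp, mul_comp, pow_comp, X_comp, one_comp]

/-- The k-fold iterate of x^2 - 2 starting from x, over ℤ. -/
noncomputable def qq : ℕ → Polynomial ℤ :=
  fun k => Nat.rec X (fun _ p => p ^ 2 - C 2) k

lemma qq_zero : qq 0 = X := rfl

lemma qq_succ (k : ℕ) : qq (k + 1) = qq k ^ 2 - C 2 := rfl

lemma qq_monic_deg : ∀ k : ℕ, (qq k).Monic ∧ (qq k).natDegree = 2 ^ k := by
  intro k
  induction k with
  | zero => exact ⟨monic_X, natDegree_X⟩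
  | succ k ih =>
    have hpm : (qq k ^ 2).Monic := ih.1.pow 2
    have hpd : (qq k ^ 2).natDegree = 2 ^ (k + 1) := by
      rw [natDegree_pow, ih.2]; ring
    have hdlt : (-(C 2 : Polynomial ℤ)).degree < (qq k ^ 2).degree := by
      calc (-(C 2 : Polynomial ℤ)).degree ≤ 0 := by simp [degree_neg]; exact degree_C_le
        _ < (qq k ^ 2).degree := by
            rw [degree_eq_natDegree hpm.ne_zero, hpd]
            exact_mod_cast WithBot.coe_lt_coe.mpr (by positivity)
    constructor
    · rw [qq_succ, sub_eq_add_neg]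
      exact hpm.add_of_left hdlt
    · rw [qq_succ, sub_eq_add_neg, natDegree_add_eq_left_of_degree_lt hdlt, hpd]

lemma qq_mod2 : ∀ k : ℕ, (qq k).map (Int.castRingHom (ZMod 2)) = X ^ 2 ^ k := by
  intro k
  induction k with
  | zero => simp [qq_zero]
  | succ k ih =>
    rw [qq_succ, Polynomial.map_sub, Polynomial.map_pow, ih, Polynomial.map_C]
    have h2 : ((Int.castRingHom (ZMod 2)) (2 : ℤ)) = 0 := by decide
    rw [h2, map_zero, sub_zero, ← pow_mul, pow_succ]

lemma qq_coeff_even (k i : ℕ) (h : i < 2 ^ k) : (2 : ℤ) ∣ (qq k).coeff i := by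
  have := congrArg (fun p => Polynomial.coeff p i) (qq_mod2 k)
  simp only [coeff_map, coeff_X_pow] at this
  rw [if_neg (by omega)] at this
  exact (ZMod.intCast_zmod_eq_zero_iff_dvd _ 2).mp (by exact_mod_cast this)

lemma qq_eval0 : ∀ k : ℕ, (qq (k+1)).eval 0 = 2 ∨ (qq (k+1)).eval 0 = -2 := by
  intro k
  induction k with
  | zero => right; simp [qq_succ, qq_zero]
  | succ k ih =>
    left
    rw [qq_succ (k+1)]
    rcases ih with h | h <;> simp [h]

lemma qq_irred (k : ℕ) : Irreducible (qq (k+1)) := by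
  have hprime : (Ideal.span {(2 : ℤ)}).IsPrime :=
    (Ideal.span_singleton_prime (by norm_num)).mpr Int.prime_two
  have hmon := (qq_monic_deg (k+1)).1
  have hdeg := (qq_monic_deg (k+1)).2
  have heis : (qq (k+1)).IsEisensteinAt (Ideal.span {(2 : ℤ)}) := by
    constructor
    · rw [hmon.leadingCoeff, Ideal.mem_span_singleton]
      norm_num
    · intro i hi
      rw [Ideal.mem_span_singleton]
      exact qq_coeff_even (k+1) i (by omega)
    · rw [Ideal.span_singleton_pow, Ideal.mem_span_singleton,
        coeff_zero_eq_eval_zero]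
      rcases qq_eval0 k with h | h <;> rw [h] <;> norm_num
  exact heis.irreducible hprime hmon.isPrimitive (by rw [hdeg]; positivity)

lemma qq_irred_Q (k : ℕ) : Irreducible ((qq (k+1)).map (algebraMap ℤ ℚ)) :=
  ((qq_monic_deg (k+1)).1.irreducible_iff_irreducible_map_fraction_map).mp (qq_irred k)

/-- The algebra automorphism of ℚ[X] given by X ↦ 2X. -/
noncomputable def compEquiv : ℚ[X] ≃ₐ[ℚ] ℚ[X] :=
  AlgEquiv.ofAlgHom (aeval (C 2 * X)) (aeval (C (1/2) * X))
    (by ext; simp)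
    (by ext; simp)

lemma rel : ∀ k : ℕ, ((qq k).map (algebraMap ℤ ℚ)).comp (C 2 * X)
    = 2 * Chebyshev.T ℚ ((2 : ℤ) ^ k) := by
  intro k
  induction k with
  | zero =>
    rw [qq_zero, Polynomial.map_X, X_comp, pow_zero, Chebyshev.T_one, map_ofNat]
  | succ k ih =>
    rw [qq_succ, Polynomial.map_sub, Polynomial.map_pow, Polynomial.map_C, sub_comp, pow_comp, C_comp, ih,
      show ((2:ℤ)^(k+1)) = 2 * 2 ^ k by ring, T_two_mul']
    have hC : (C ((algebraMap ℤ ℚ) (2:ℤ)) : ℚ[X]) = 2 := by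
      rw [show ((algebraMap ℤ ℚ) (2:ℤ)) = (2:ℚ) by norm_num, map_ofNat]
    rw [hC]
    ring

end Stmt17Aux

open Stmt17Aux Polynomial.Chebyshev in
theorem stmt_17 (n : ℕ) :
    Irreducible (Polynomial.Chebyshev.T ℚ n) ↔ ∃ k : ℕ, n = 2 ^ k := by
  constructor
  · intro h
    by_contra hn
    push_neg at hn
    have hn0 : n ≠ 0 := by
      intro hc
      subst hc
      simp [Chebyshev.T_zero] at h
    obtain ⟨a, m, heq, hm2⟩ : ∃ a m, 2 ^ a * m = n ∧ ¬ (2 ∣ m) :=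
      ⟨n.factorization 2, n / 2 ^ (n.factorization 2),
        Nat.ordProj_mul_ordCompl_eq_self n 2, Nat.not_dvd_ordCompl Nat.prime_two hn0⟩
    have hm1 : m ≠ 1 := by
      intro hc
      rw [hc, mul_one] at heq
      exact hn a heq.symm
    have hm0 : m ≠ 0 := by
      intro hc
      rw [hc, mul_zero] at heq
      exact hn0 heq.symm
    have hmod : m % 2 = 1 := Nat.two_dvd_ne_zero.mp hm2
    have hm3 : 3 ≤ m := by omega
    obtain ⟨j, hj⟩ : ∃ j, m = 2 * j + 1 := ⟨m / 2, by omega⟩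
    have hXdvd : X ∣ Chebyshev.T ℚ (m : ℤ) := by
      rw [X_dvd_iff, coeff_zero_eq_eval_zero]
      have := T_odd_eval j
      rw [show ((m : ℤ)) = 2 * (j : ℤ) + 1 by rw [hj]; push_cast; ring]
      exact this
    obtain ⟨W, hW⟩ := hXdvd
    have hfact : Chebyshev.T ℚ (n : ℤ) =
        Chebyshev.T ℚ ((2 ^ a : ℕ) : ℤ) * W.comp (Chebyshev.T ℚ ((2 ^ a : ℕ) : ℤ)) := by
      have : ((n : ℤ)) = (m : ℤ) * ((2 ^ a : ℕ) : ℤ) := by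
        push_cast
        rw [← heq]
        push_cast
        ring
      rw [this, Chebyshev.T_mul, hW, mul_comp, X_comp]
    have hWne : W ≠ 0 := by
      intro hc
      rw [hc, mul_zero] at hW
      exact T_ne_zero m hW
    have hWdeg : W.natDegree = m - 1 := by
      have := (T_deg_lead m).1
      rw [hW, natDegree_mul X_ne_zero hWne, natDegree_X] at this
      omega
    rcases h.isUnit_or_isUnit hfact with hu | hu
    · exact not_isUnit_of_natDegree_pos _ (by rw [(T_deg_lead (2 ^ a)).1]; positivity) hu
    · refine not_isUnit_of_natDegree_pos _ ?_ hu
      rw [natDegree_comp, hWdeg, (T_deg_lead (2 ^ a)).1]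
      have : 0 < 2 ^ a := Nat.pow_pos (by norm_num)
      have : 0 < m - 1 := by omega
      positivity
  · rintro ⟨k, rfl⟩
    cases k with
    | zero =>
      simp only [pow_zero, Nat.cast_one, Chebyshev.T_one]
      exact irreducible_X
    | succ k =>
      have h1 := qq_irred_Q (k)
      have h2 : Irreducible (((qq (k+1)).map (algebraMap ℤ ℚ)).comp (C 2 * X)) := by
        have := (MulEquiv.irreducible_iff (compEquiv.toMulEquiv)).mpr h1
        have hce : compEquiv.toMulEquiv ((qq (k+1)).map (algebraMap ℤ ℚ))
            = ((qq (k+1)).map (algebraMap ℤ ℚ)).comp (C 2 * X) := by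
          show aeval (C 2 * X) _ = _
          rw [comp_eq_aeval]
        rwa [hce] at this
      rw [rel (k+1)] at h2
      have hcast : ((2 ^ (k+1) : ℕ) : ℤ) = (2 : ℤ) ^ (k+1) := by push_cast; ring
      rw [hcast]
      have hu : IsUnit (2 : ℚ[X]) := by
        rw [← map_ofNat (C : ℚ →+* ℚ[X]) 2]
        exact isUnit_C.mpr (by norm_num)
      have hassoc : Associated (2 * Chebyshev.T ℚ ((2:ℤ) ^ (k+1)))
          (Chebyshev.T ℚ ((2:ℤ) ^ (k+1))) := by
        rw [mul_comm]
        exact associated_mul_unit_left _ _ hu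
      exact hassoc.irreducible h2
end
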